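/- Let (u, v, pu, pv) solve the FLRW null geodesic system on an interval I with angular momentum L ≥ 0. If the mass shell relation 4t²r²·pu·pv = L² holds at some point s₁ ∈ I, then it holds at every point of I. (Indeed, M := 4t²r²·pu·pv satisfies the linear ODE M' = (t^{−1/2}(pu+pv) + 2r'/r)·(M − L²) along the flow.) -/

import Mathlib

open Set

/-- Auxiliary uniqueness result: a solution of the scalar linear ODE `f' = c (f - A)`
with continuous coefficient that equals `A` at one point of a convex set equals `A`
everywhere on that set. -/
lemma linODE_eq_const {I : Set ℝ} (hI : Convex ℝ I) {c f : ℝ → ℝ} {A : ℝ}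
    (hc : ∀ s ∈ I, ContinuousAt c s)
    (hf : ∀ s ∈ I, HasDerivAt f (c s * (f s - A)) s)
    {s₁ : ℝ} (hs₁ : s₁ ∈ I) (h₁ : f s₁ = A) : ∀ s ∈ I, f s = A := by
  intro s hs
  have hJ : uIcc s₁ s ⊆ I := (hI.ordConnected).uIcc_subset hs₁ hs
  have hcJ : ContinuousOn c (uIcc s₁ s) := fun τ hτ => (hc τ (hJ hτ)).continuousWithinAt
  obtain ⟨C, hC⟩ := isCompact_uIcc.exists_bound_of_continuousOn hcJ
  set K : ℝ := max C 0 with hK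
  have hK0 : 0 ≤ K := le_max_right _ _
  set cl : ℝ → ℝ := fun τ => max (-K) (min K (c τ)) with hcl
  have hclK : ∀ τ, |cl τ| ≤ K := by
    intro τ
    rw [abs_le]
    constructor
    · exact le_max_left _ _
    · exact max_le (by linarith) (min_le_left _ _)
  have hcleq : ∀ τ ∈ uIcc s₁ s, cl τ = c τ := by
    intro τ hτ
    have := hC τ hτ
    rw [Real.norm_eq_abs, abs_le] at this
    simp only [hcl]
    rw [min_eq_right (le_trans this.2 (le_max_left _ _)),
      max_eq_right (le_trans (neg_le_neg (le_max_left C 0)) this.1)]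
  set V : ℝ → ℝ → ℝ := fun τ x => cl τ * (x - A) with hV
  have hlip : ∀ τ, LipschitzOnWith ⟨K, hK0⟩ (V τ) univ := by
    intro τ
    apply LipschitzWith.lipschitzOnWith
    apply LipschitzWith.of_dist_le_mul
    intro x y
    simp only [hV, Real.dist_eq]
    have : cl τ * (x - A) - cl τ * (y - A) = cl τ * (x - y) := by ring
    rw [this, abs_mul]
    exact mul_le_mul_of_nonneg_right (hclK τ) (abs_nonneg _)
  have hgd : ∀ (τ : ℝ), HasDerivAt (fun _ : ℝ => A) (V τ A) τ := by
    intro τ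
    have : V τ A = 0 := by simp [hV]
    rw [this]
    exact hasDerivAt_const _ _
  rcases le_total s₁ s with h | h
  · have key := ODE_solution_unique_of_mem_Icc_right (v := V) (s := fun _ => univ) (fun τ _ => hlip τ)
      (f := f) (g := fun _ => A) (a := s₁) (b := s)
      (fun τ hτ => (hf τ (hJ (by rwa [uIcc_of_le h]))).continuousAt.continuousWithinAt)
      (fun τ hτ => by
        have hτI : τ ∈ I := hJ (by rw [uIcc_of_le h]; exact Ico_subset_Icc_self hτ)
        have := (hf τ hτI).hasDerivWithinAt (s := Ici τ)
        rwa [← hcleq τ (by rw [uIcc_of_le h]; exact Ico_subset_Icc_self hτ)] at this)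
      (fun τ _ => mem_univ _)
      continuousOn_const
      (fun τ _ => (hgd τ).hasDerivWithinAt)
      (fun τ _ => mem_univ _) h₁
    exact key (right_mem_Icc.mpr h)
  · have key := ODE_solution_unique_of_mem_Icc_left (v := V) (s := fun _ => univ) (fun τ _ => hlip τ)
      (f := f) (g := fun _ => A) (a := s) (b := s₁)
      (fun τ hτ => (hf τ (hJ (by rwa [uIcc_of_ge h]))).continuousAt.continuousWithinAt)
      (fun τ hτ => by
        have hmem : τ ∈ Icc s s₁ := Ioc_subset_Icc_self hτ
        have hτI : τ ∈ I := hJ (by rwa [uIcc_of_ge h])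
        have := (hf τ hτI).hasDerivWithinAt (s := Iic τ)
        rwa [← hcleq τ (by rwa [uIcc_of_ge h])] at this)
      (fun τ _ => mem_univ _)
      continuousOn_const
      (fun τ _ => (hgd τ).hasDerivWithinAt)
      (fun τ _ => mem_univ _) h₁
    exact key (left_mem_Icc.mpr h)

/-- The time coordinate `t = (v+u)²/4` along a curve in double null coordinates. -/
noncomputable def tOf (u v : ℝ → ℝ) (s : ℝ) : ℝ := (v s + u s) ^ 2 / 4

/-- The radial coordinate `r = v − u` along a curve in double null coordinates. -/
noncomputable def rOf (u v : ℝ → ℝ) (s : ℝ) : ℝ := v s - u s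

/-- **The FLRW null geodesic system** with angular momentum `L` on a set `I ⊆ ℝ`:
`u' = pu`, `v' = pv`,
`pu' = −t^{−1/2}·pu² − (1/2)(1/(2t^{1/2}) + 1/r)·L²/(t²r²)`,
`pv' = −t^{−1/2}·pv² − (1/2)(1/(2t^{1/2}) − 1/r)·L²/(t²r²)`,
where `t = (v+u)²/4` and `r = v−u` are required to satisfy `v+u > 0`, `r > 0` on `I`,
and `pu ≥ 0`, `pv ≥ 0` on `I`. -/
def FLRWGeodesicSystem (I : Set ℝ) (L : ℝ) (u v pu pv : ℝ → ℝ) : Prop :=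
  (∀ s ∈ I, 0 < v s + u s) ∧
  (∀ s ∈ I, 0 < rOf u v s) ∧
  (∀ s ∈ I, 0 ≤ pu s) ∧
  (∀ s ∈ I, 0 ≤ pv s) ∧
  (∀ s ∈ I, HasDerivAt u (pu s) s) ∧
  (∀ s ∈ I, HasDerivAt v (pv s) s) ∧
  (∀ s ∈ I, HasDerivAt pu
    (-(pu s) ^ 2 / Real.sqrt (tOf u v s)
      - 1 / 2 * (1 / (2 * Real.sqrt (tOf u v s)) + 1 / rOf u v s) * L ^ 2
          / ((tOf u v s) ^ 2 * (rOf u v s) ^ 2)) s) ∧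
  (∀ s ∈ I, HasDerivAt pv
    (-(pv s) ^ 2 / Real.sqrt (tOf u v s)
      - 1 / 2 * (1 / (2 * Real.sqrt (tOf u v s)) - 1 / rOf u v s) * L ^ 2
          / ((tOf u v s) ^ 2 * (rOf u v s) ^ 2)) s)

/-- The derivative of the mass shell quantity `M = 4t²r²·pu·pv` along the flow. -/
lemma flrw_mass_shell_hasDerivAt (L : ℝ) (u v pu pv : ℝ → ℝ) (s : ℝ)
    (hpos : 0 < v s + u s) (hrpos : 0 < rOf u v s)
    (hu' : HasDerivAt u (pu s) s) (hv' : HasDerivAt v (pv s) s)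
    (hpu' : HasDerivAt pu
      (-(pu s) ^ 2 / Real.sqrt (tOf u v s)
        - 1 / 2 * (1 / (2 * Real.sqrt (tOf u v s)) + 1 / rOf u v s) * L ^ 2
            / ((tOf u v s) ^ 2 * (rOf u v s) ^ 2)) s)
    (hpv' : HasDerivAt pv
      (-(pv s) ^ 2 / Real.sqrt (tOf u v s)
        - 1 / 2 * (1 / (2 * Real.sqrt (tOf u v s)) - 1 / rOf u v s) * L ^ 2
            / ((tOf u v s) ^ 2 * (rOf u v s) ^ 2)) s) :
    HasDerivAt
      (fun s' => 4 * (tOf u v s') ^ 2 * (rOf u v s') ^ 2 * pu s' * pv s')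
      (((pu s + pv s) / Real.sqrt (tOf u v s) + 2 * (pv s - pu s) / rOf u v s) *
        (4 * (tOf u v s) ^ 2 * (rOf u v s) ^ 2 * pu s * pv s - L ^ 2)) s := by
  have htpos : 0 < tOf u v s := by
    unfold tOf; positivity
  have hst : Real.sqrt (tOf u v s) = (v s + u s) / 2 := by
    have : tOf u v s = ((v s + u s) / 2) ^ 2 := by unfold tOf; ring
    rw [this, Real.sqrt_sq (by linarith)]
  have hT : HasDerivAt (fun s' => tOf u v s') (Real.sqrt (tOf u v s) * (pu s + pv s)) s := by
    have h := ((hv'.add hu').pow 2).div_const 4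
    refine h.congr_deriv ?_
    simp only [Pi.add_apply, Pi.mul_apply, Pi.pow_apply]
    rw [hst]; ring
  have hR : HasDerivAt (fun s' => rOf u v s') (pv s - pu s) s := hv'.sub hu'
  have h1 := ((hT.pow 2).const_mul 4).mul (hR.pow 2)
  have h2 := (h1.mul hpu').mul hpv'
  refine h2.congr_deriv ?_
  simp only [Pi.add_apply, Pi.mul_apply, Pi.pow_apply]
  set st := Real.sqrt (tOf u v s) with hstdef
  have hstpos : 0 < st := Real.sqrt_pos.mpr htpos
  have hst2 : st ^ 2 = tOf u v s := Real.sq_sqrt htpos.le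
  rw [← hst2]
  field_simp
  ring

/-- **Propagation of the mass shell relation along FLRW null geodesics.**
If `(u,v,pu,pv)` solves the FLRW null geodesic system on an interval `I` with angular
momentum `L ≥ 0` and the mass shell relation `4t²r²·pu·pv = L²` holds at some point
`s₁ ∈ I`, then it holds at every point of `I`.  Indeed, `M := 4t²r²·pu·pv` satisfies
the linear ODE `M' = (t^{−1/2}(pu+pv) + 2r'/r)·(M − L²)` along the flow
(where `r' = pv − pu`). -/
theorem flrw_geodesic_mass_shell_propagates (I : Set ℝ) (hI : Convex ℝ I)
    (L : ℝ) (hL : 0 ≤ L) (u v pu pv : ℝ → ℝ)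
    (hsys : FLRWGeodesicSystem I L u v pu pv)
    (hms : ∃ s₁ ∈ I, 4 * (tOf u v s₁) ^ 2 * (rOf u v s₁) ^ 2 * pu s₁ * pv s₁ = L ^ 2) :
    (∀ s ∈ I, 4 * (tOf u v s) ^ 2 * (rOf u v s) ^ 2 * pu s * pv s = L ^ 2) ∧
    (∀ s ∈ I, HasDerivAt
      (fun s' => 4 * (tOf u v s') ^ 2 * (rOf u v s') ^ 2 * pu s' * pv s')
      (((pu s + pv s) / Real.sqrt (tOf u v s) + 2 * (pv s - pu s) / rOf u v s) *
        (4 * (tOf u v s) ^ 2 * (rOf u v s) ^ 2 * pu s * pv s - L ^ 2)) s) := by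
  obtain ⟨hsum, hr, _, _, hu, hv, hpu, hpv⟩ := hsys
  have hder : ∀ s ∈ I, HasDerivAt
      (fun s' => 4 * (tOf u v s') ^ 2 * (rOf u v s') ^ 2 * pu s' * pv s')
      (((pu s + pv s) / Real.sqrt (tOf u v s) + 2 * (pv s - pu s) / rOf u v s) *
        (4 * (tOf u v s) ^ 2 * (rOf u v s) ^ 2 * pu s * pv s - L ^ 2)) s := by
    intro s hs
    exact flrw_mass_shell_hasDerivAt L u v pu pv s (hsum s hs) (hr s hs)
      (hu s hs) (hv s hs) (hpu s hs) (hpv s hs)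
  refine ⟨?_, hder⟩
  obtain ⟨s₁, hs₁, h₁⟩ := hms
  apply linODE_eq_const hI
    (c := fun τ => (pu τ + pv τ) / Real.sqrt (tOf u v τ) + 2 * (pv τ - pu τ) / rOf u v τ)
    (f := fun s' => 4 * (tOf u v s') ^ 2 * (rOf u v s') ^ 2 * pu s' * pv s') ?_ ?_ hs₁ h₁
  · intro s hs
    have htpos : 0 < tOf u v s := by
      have := hsum s hs; unfold tOf; positivity
    have hTc : ContinuousAt (fun s' => tOf u v s') s := by
      simp only [tOf]
      exact (((hv s hs).continuousAt.add (hu s hs).continuousAt).pow 2).div_const 4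
    have hsqc : ContinuousAt (fun s' => Real.sqrt (tOf u v s')) s :=
      Real.continuous_sqrt.continuousAt.comp hTc
    have hRc : ContinuousAt (fun s' => rOf u v s') s := by
      simp only [rOf]
      exact (hv s hs).continuousAt.sub (hu s hs).continuousAt
    exact (((hpu s hs).continuousAt.add (hpv s hs).continuousAt).div hsqc
        (ne_of_gt (Real.sqrt_pos.mpr htpos))).add
      ((continuousAt_const.mul ((hpv s hs).continuousAt.sub (hpu s hs).continuousAt)).div hRc
        (ne_of_gt (hr s hs)))
  · intro s hs
    exact hder s hs
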